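/- Let C be a monoidal category equipped with a functor inv : C ⥤ C and, for every object x, isomorphisms i_x : 𝟙_C ⟶ x ⊗ inv.obj x and e_x : inv.obj x ⊗ x ⟶ 𝟙_C which are natural in x, i.e. for every morphism f : x ⟶ y one has i_x ≫ (f ⊗ inv.map f) = i_y and (inv.map f ⊗ f) ≫ e_y = e_x. Then every morphism of C is an isomorphism, i.e. C is a groupoid. -/

import Mathlib

open CategoryTheory MonoidalCategory

/-- If a monoidal category is equipped with an inverse functor `inv` and natural
isomorphisms `i_x : 𝟙_C ≅ x ⊗ inv x` and `e_x : inv x ⊗ x ≅ 𝟙_C`, then every morphism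
is an isomorphism, i.e. the category is a groupoid. -/
theorem stmt9 {C : Type*} [Category C] [MonoidalCategory C]
    (inv : C ⥤ C)
    (i : ∀ x : C, 𝟙_ C ≅ x ⊗ inv.obj x)
    (e : ∀ x : C, inv.obj x ⊗ x ≅ 𝟙_ C)
    (hi : ∀ {x y : C} (f : x ⟶ y), (i x).hom ≫ (f ⊗ₘ inv.map f) = (i y).hom)
    (he : ∀ {x y : C} (f : x ⟶ y), (inv.map f ⊗ₘ f) ≫ (e y).hom = (e x).hom) :
    ∀ {x y : C} (f : x ⟶ y), IsIso f := by
  intro x y f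
  -- `f ⊗ inv.map f` is an isomorphism
  have h1 : f ⊗ₘ inv.map f = (i x).inv ≫ (i y).hom := by
    rw [← hi f, Iso.inv_hom_id_assoc]
  -- split mono: from `(f ▷ inv x) ≫ (y ◁ inv.map f) = f ⊗ inv.map f` iso
  have m1 : IsSplitMono (f ▷ inv.obj x) := by
    refine IsSplitMono.mk' ⟨(y ◁ inv.map f) ≫ (i y).inv ≫ (i x).hom, ?_⟩
    rw [← Category.assoc, ← MonoidalCategory.tensorHom_def, h1]
    simp
  -- split epi: from `(x ◁ inv.map f) ≫ (f ▷ inv y) = f ⊗ inv.map f` iso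
  have e1 : IsSplitEpi (f ▷ inv.obj y) := by
    refine IsSplitEpi.mk' ⟨(i y).inv ≫ (i x).hom ≫ (x ◁ inv.map f), ?_⟩
    rw [Category.assoc, Category.assoc, ← MonoidalCategory.tensorHom_def', h1]
    simp
  -- whiskering on the right by an object preserves split monos/epis
  have m2 : IsSplitMono ((f ▷ inv.obj x) ▷ x) :=
    inferInstanceAs (IsSplitMono ((tensorRight x).map (f ▷ inv.obj x)))
  have e2 : IsSplitEpi ((f ▷ inv.obj y) ▷ y) :=
    inferInstanceAs (IsSplitEpi ((tensorRight y).map (f ▷ inv.obj y)))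
  -- express `f` as a composite through the whiskered morphisms
  have decompMono :
      f = (ρ_ x).inv ≫ (x ◁ (e x).inv) ≫ (α_ x (inv.obj x) x).inv ≫
        ((f ▷ inv.obj x) ▷ x) ≫ (α_ y (inv.obj x) x).hom ≫ (y ◁ (e x).hom) ≫ (ρ_ y).hom := by
    rw [associator_naturality_left_assoc, Iso.inv_hom_id_assoc, ← whisker_exchange_assoc]
    simp
  have decompEpi :
      f = (ρ_ x).inv ≫ (x ◁ (e y).inv) ≫ (α_ x (inv.obj y) y).inv ≫
        ((f ▷ inv.obj y) ▷ y) ≫ (α_ y (inv.obj y) y).hom ≫ (y ◁ (e y).hom) ≫ (ρ_ y).hom := by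
    rw [associator_naturality_left_assoc, Iso.inv_hom_id_assoc, ← whisker_exchange_assoc]
    simp
  have hm : IsSplitMono f := by
    rw [decompMono]; infer_instance
  have hep : IsSplitEpi f := by
    rw [decompEpi]; infer_instance
  exact isIso_of_epi_of_isSplitMono f
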